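/- For every c > 0, the function P ↦ P / log₂(1 + c·P) is strictly increasing on (0, ∞). Consequently, for fixed data size D > 0, bandwidth B > 0, channel gain G > 0 and noise density N0 > 0, the transmission energy E_com(P) = D·P / (B·log₂(1 + G·P/(N0·B))) is strictly increasing in the transmit power P on (0, ∞). -/

import Mathlib

lemma key (c : ℝ) (hc : 0 < c) {x y : ℝ} (hx : 0 < x) (hxy : x < y) :
    x * Real.log (1 + c * y) < y * Real.log (1 + c * x) := by
  have hy : 0 < y := hx.trans hxy
  set a : ℝ := x / y with ha_def
  have ha : 0 < a := div_pos hx hy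
  have ha1 : a < 1 := (div_lt_one hy).2 hxy
  have h1 : (1 : ℝ) ∈ Set.Ioi (0 : ℝ) := by norm_num
  have h2 : (1 + c * y) ∈ Set.Ioi (0 : ℝ) := by
    simp only [Set.mem_Ioi]; nlinarith
  have hne : (1 : ℝ) ≠ 1 + c * y := by nlinarith
  have hcc := strictConcaveOn_log_Ioi.2 h1 h2 hne (by linarith : (0:ℝ) < 1 - a) ha
    (by ring)
  simp only [smul_eq_mul, Real.log_one, mul_zero, mul_one] at hcc
  have hcomb : 1 - a + a * (1 + c * y) = 1 + c * x := by
    rw [ha_def, show (1:ℝ) - x/y + x/y*(1+c*y) = 1 + c*(x/y*y) by ring, div_mul_cancel₀ x hy.ne']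
  rw [hcomb] at hcc
  have : y * (a * Real.log (1 + c * y)) < y * Real.log (1 + c * x) := by
    have := mul_lt_mul_of_pos_left hcc hy
    linarith
  have hya : y * a = x := by rw [ha_def]; field_simp
  have heq : x * Real.log (1 + c * y) = y * (a * Real.log (1 + c * y)) := by
    rw [← mul_assoc, hya]
  linarith

lemma part1 (c : ℝ) (hc : 0 < c) :
    StrictMonoOn (fun P : ℝ => P / Real.logb 2 (1 + c * P)) (Set.Ioi (0 : ℝ)) := by
  intro x hx y hy hxy
  simp only [Set.mem_Ioi] at hx hy
  have hLx : 0 < Real.log (1 + c * x) := Real.log_pos (by nlinarith)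
  have hLy : 0 < Real.log (1 + c * y) := Real.log_pos (by nlinarith)
  have hl2 : 0 < Real.log 2 := Real.log_pos (by norm_num)
  simp only [Real.logb]
  rw [div_div_eq_mul_div, div_div_eq_mul_div, div_lt_div_iff₀ hLx hLy]
  have := key c hc hx hxy
  nlinarith [this]

theorem fast_transmission_energy_strictMono :
    (∀ c : ℝ, 0 < c →
      StrictMonoOn (fun P : ℝ => P / Real.logb 2 (1 + c * P))
        (Set.Ioi (0 : ℝ))) ∧
    (∀ D B G N0 : ℝ, 0 < D → 0 < B → 0 < G → 0 < N0 →
      StrictMonoOn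
        (fun P : ℝ => D * P / (B * Real.logb 2 (1 + G * P / (N0 * B))))
        (Set.Ioi (0 : ℝ))) := by
  refine ⟨part1, ?_⟩
  intro D B G N0 hD hB hG hN0 x hx y hy hxy
  have hc : 0 < G / (N0 * B) := div_pos hG (mul_pos hN0 hB)
  have h := part1 _ hc hx hy hxy
  simp only at h ⊢
  have hrw : ∀ P : ℝ, G * P / (N0 * B) = G / (N0 * B) * P := by
    intro P; ring
  rw [hrw x, hrw y]
  have hLx : 0 < Real.logb 2 (1 + G / (N0 * B) * x) := by
    apply Real.logb_pos (by norm_num)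
    simp only [Set.mem_Ioi] at hx; nlinarith
  have hLy : 0 < Real.logb 2 (1 + G / (N0 * B) * y) := by
    apply Real.logb_pos (by norm_num)
    simp only [Set.mem_Ioi] at hy; nlinarith
  rw [div_lt_div_iff₀ hLx hLy] at h
  rw [div_lt_div_iff₀ (mul_pos hB hLx) (mul_pos hB hLy)]
  have h2 := mul_lt_mul_of_pos_left h (mul_pos hD hB)
  nlinarith [h2]
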